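/- Let n ≥ 1 be a natural number and let d = ⟨d_0, …, d_{ℓ−1}⟩ be an extended regular representation of n. Then the sum of the digits satisfies Σ_{i<ℓ} d_i ≤ 2·(⌊log₂ n⌋ + 1). -/

import Mathlib

/-- The value `Σ_{i<ℓ} d_i · 2^i` of a digit string. -/
def digitVal (d : List ℕ) : ℕ := ∑ i ∈ Finset.range d.length, d.getD i 0 * 2 ^ i

/-- A digit string `⟨d_0, …, d_{ℓ−1}⟩` is extended regular if
(i) every `3` is preceded by a `0` or a `1` with only `2`'s in between, and
(ii) every `0` is preceded by a `2` or a `3` with only `1`'s in between. -/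
def ExtReg (d : List ℕ) : Prop :=
  (∀ j < d.length, d.getD j 0 = 3 →
      ∃ k < j, (d.getD k 0 = 0 ∨ d.getD k 0 = 1) ∧
        ∀ m, k < m → m < j → d.getD m 0 = 2) ∧
  (∀ j < d.length, d.getD j 0 = 0 →
      ∃ k < j, (d.getD k 0 = 2 ∨ d.getD k 0 = 3) ∧
        ∀ m, k < m → m < j → d.getD m 0 = 1)

/-- An extended regular representation of a natural number `n`: an extended
regular digit string with digits at most `3`, whose last digit is nonzero
(the number `0` is represented by the empty string), and whose value is `n`. -/
def IsExtRegRep (d : List ℕ) (n : ℕ) : Prop :=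
  (∀ x ∈ d, x ≤ 3) ∧ ExtReg d ∧ (d ≠ [] → d.getLastD 0 ≠ 0) ∧ digitVal d = n

/-- The number of positions at which two digit strings differ, after padding
the shorter one with trailing zeros. -/
def diffCount (d d' : List ℕ) : ℕ :=
  ((Finset.range (max d.length d'.length)).filter
    (fun k => d.getD k 0 ≠ d'.getD k 0)).card

lemma aux_sum_eq (d : List ℕ) : d.sum = ∑ i ∈ Finset.range d.length, d.getD i 0 := by
  induction d with
  | nil => simp
  | cons a t ih => simp [Finset.sum_range_succ', ih, Nat.add_comm]

/-- For `n ≥ 1`, the digit sum of an extended regular representation of `n`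
is at most `2·(⌊log₂ n⌋ + 1)`. -/
theorem stmt_17 (n : ℕ) (hn : 1 ≤ n) (d : List ℕ) (hd : IsExtRegRep d n) :
    d.sum ≤ 2 * (Nat.log 2 n + 1) := by
  classical
  obtain ⟨hle, ⟨h3, _⟩, hlast, hval⟩ := hd
  set ℓ := d.length with hℓ
  have hdne : d ≠ [] := by
    rintro rfl
    simp [digitVal] at hval; omega
  have hℓpos : 1 ≤ ℓ := by
    rw [hℓ]; exact List.length_pos_iff.mpr hdne
  have hlast' : d.getD (ℓ - 1) 0 ≠ 0 := by
    have := hlast hdne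
    rwa [List.getLastD_eq_getLast?, List.getLast?_eq_getElem?,
      ← List.getD_eq_getElem?_getD] at this
  have hpow : 2 ^ (ℓ - 1) ≤ n := by
    rw [← hval]
    calc 2 ^ (ℓ - 1) ≤ d.getD (ℓ - 1) 0 * 2 ^ (ℓ - 1) :=
          Nat.le_mul_of_pos_left _ (Nat.pos_of_ne_zero hlast')
      _ ≤ digitVal d := Finset.single_le_sum (f := fun i => d.getD i 0 * 2 ^ i)
          (fun _ _ => Nat.zero_le _) (Finset.mem_range.mpr (by omega))
  have hlog : ℓ ≤ Nat.log 2 n + 1 := by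
    have := (Nat.le_log_iff_pow_le (by norm_num) (by omega)).mpr hpow
    omega
  have hd3 : ∀ i, d.getD i 0 ≤ 3 := by
    intro i
    by_cases h : i < d.length
    · exact hle _ (by rw [List.getD_eq_getElem d 0 h]; exact List.getElem_mem h)
    · rw [List.getD_eq_getElem?_getD, List.getElem?_eq_none (by omega)]
      exact Nat.zero_le _
  -- matching each 3 with an earlier small digit
  set T := (Finset.range ℓ).filter (fun j => d.getD j 0 = 3) with hT
  set S := (Finset.range ℓ).filter (fun j => d.getD j 0 ≤ 1) with hS
  set f : ℕ → ℕ := fun j =>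
    if h : j < d.length ∧ d.getD j 0 = 3 then (h3 j h.1 h.2).choose else 0 with hf
  have hfspec : ∀ j ∈ T, f j < j ∧ (d.getD (f j) 0 = 0 ∨ d.getD (f j) 0 = 1) ∧
      ∀ m, f j < m → m < j → d.getD m 0 = 2 := by
    intro j hj
    rw [hT, Finset.mem_filter, Finset.mem_range] at hj
    have h : j < d.length ∧ d.getD j 0 = 3 := ⟨hj.1, hj.2⟩
    have hspec := (h3 j h.1 h.2).choose_spec
    rw [hf]
    simp only [dif_pos h]
    exact ⟨hspec.1, hspec.2.1, hspec.2.2⟩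
  have hmaps : ∀ j ∈ T, f j ∈ S := by
    intro j hj
    obtain ⟨h1, h2, _⟩ := hfspec j hj
    rw [hT, Finset.mem_filter, Finset.mem_range] at hj
    rw [hS, Finset.mem_filter, Finset.mem_range]
    exact ⟨by omega, by omega⟩
  have hinj : Set.InjOn f T := by
    have key : ∀ j1 ∈ T, ∀ j2 ∈ T, j1 < j2 → f j1 ≠ f j2 := by
      intro j1 hj1 j2 hj2 hlt heq
      obtain ⟨ha1, _, _⟩ := hfspec j1 hj1
      obtain ⟨_, _, hb3⟩ := hfspec j2 hj2
      have h31 : d.getD j1 0 = 3 := by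
        rw [hT, Finset.mem_filter] at hj1; exact hj1.2
      have := hb3 j1 (by omega) hlt
      omega
    intro j1 hj1 j2 hj2 heq
    rcases lt_trichotomy j1 j2 with h | h | h
    · exact absurd heq (key j1 hj1 j2 hj2 h)
    · exact h
    · exact absurd heq.symm (key j2 hj2 j1 hj1 h)
  have hcard : T.card ≤ S.card := Finset.card_le_card_of_injOn f hmaps hinj
  -- the digit sum bound: d.sum + S.card ≤ 2ℓ + T.card
  have hmain : d.sum + S.card ≤ 2 * ℓ + T.card := by
    rw [aux_sum_eq, ← hℓ, hS, hT, Finset.card_filter, Finset.card_filter,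
      ← Finset.sum_add_distrib]
    calc ∑ i ∈ Finset.range ℓ,
          (d.getD i 0 + if d.getD i 0 ≤ 1 then 1 else 0)
        ≤ ∑ i ∈ Finset.range ℓ, (2 + if d.getD i 0 = 3 then 1 else 0) := by
          apply Finset.sum_le_sum
          intro i _
          have := hd3 i
          split_ifs <;> omega
      _ = 2 * ℓ + ∑ i ∈ Finset.range ℓ, (if d.getD i 0 = 3 then 1 else 0) := by
          rw [Finset.sum_add_distrib, Finset.sum_const, Finset.card_range,
            smul_eq_mul, Nat.mul_comm]
  omega
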